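/- arXiv:2604.27758 — 2 statements merged into one kernel-verified Lean document; each statement's English description precedes it below -/
import Mathlib

section
/- For every nonnegative integer τ, every real υ, and every positive polynomial q of degree 2m, there is a constant C > 0 such that the τ-th derivative of ρ_υ(x) = (q(x))^(−υ/(2m)) satisfies |ρ_υ^(τ)(x)| ≤ C·(1+x²)^(−(υ+τ)/2) for all real x. -/
open Real

lemma aux_abs_le (x : ℝ) : |x| ≤ (1 + x ^ 2) ^ ((1:ℝ) / 2) := by
  have h1 : |x| = (x ^ 2) ^ ((1:ℝ) / 2) := by
    rw [← Real.sqrt_eq_rpow, Real.sqrt_sq_eq_abs]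
  rw [h1]
  apply Real.rpow_le_rpow (by positivity) (by nlinarith) (by norm_num)

lemma aux_poly_bound (p : Polynomial ℝ) :
    ∃ C : ℝ, 0 < C ∧ ∀ x : ℝ, |p.eval x| ≤ C * (1 + x ^ 2) ^ ((p.natDegree : ℝ) / 2) := by
  classical
  set d := p.natDegree
  refine ⟨(∑ i ∈ Finset.range (d + 1), |p.coeff i|) + 1, by positivity, fun x => ?_⟩
  have hbase : (1:ℝ) ≤ 1 + x ^ 2 := by nlinarith
  have hpow : ∀ i : ℕ, i ≤ d → |x| ^ i ≤ (1 + x ^ 2) ^ ((d : ℝ) / 2) := by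
    intro i hi
    calc |x| ^ i ≤ ((1 + x ^ 2) ^ ((1:ℝ) / 2)) ^ i :=
          pow_le_pow_left₀ (abs_nonneg x) (aux_abs_le x) i
      _ = (1 + x ^ 2) ^ ((i : ℝ) / 2) := by
          rw [← Real.rpow_natCast ((1 + x ^ 2) ^ ((1:ℝ)/2)) i, ← Real.rpow_mul (by positivity)]
          ring_nf
      _ ≤ (1 + x ^ 2) ^ ((d : ℝ) / 2) := by
          apply Real.rpow_le_rpow_of_exponent_le hbase
          have : (i : ℝ) ≤ d := Nat.cast_le.mpr hi
          linarith
  have heval : p.eval x = ∑ i ∈ Finset.range (d + 1), p.coeff i * x ^ i := by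
    rw [Polynomial.eval_eq_sum_range]
  calc |p.eval x| ≤ ∑ i ∈ Finset.range (d + 1), |p.coeff i * x ^ i| := by
        rw [heval]; exact Finset.abs_sum_le_sum_abs _ _
    _ ≤ ∑ i ∈ Finset.range (d + 1), |p.coeff i| * (1 + x ^ 2) ^ ((d : ℝ) / 2) := by
        apply Finset.sum_le_sum
        intro i hi
        rw [abs_mul, abs_pow]
        exact mul_le_mul_of_nonneg_left
          (hpow i (Nat.lt_succ_iff.mp (Finset.mem_range.mp hi))) (abs_nonneg _)
    _ = (∑ i ∈ Finset.range (d + 1), |p.coeff i|) * (1 + x ^ 2) ^ ((d : ℝ) / 2) := by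
        rw [← Finset.sum_mul]
    _ ≤ ((∑ i ∈ Finset.range (d + 1), |p.coeff i|) + 1) * (1 + x ^ 2) ^ ((d : ℝ) / 2) := by
        apply mul_le_mul_of_nonneg_right (by linarith) (by positivity)

lemma aux_q_lower (m : ℕ) (hm : 1 ≤ m) (q : Polynomial ℝ)
    (hdeg : q.natDegree = 2 * m) (hpos : ∀ x : ℝ, 0 < q.eval x) :
    ∃ c : ℝ, 0 < c ∧ ∀ x : ℝ, c * (1 + x ^ 2) ^ (m : ℝ) ≤ q.eval x := by
  have hq0 : q ≠ 0 := by
    intro h; rw [h] at hdeg; simp at hdeg; omega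
  have hdegpos : 0 < q.degree := by
    rw [q.degree_eq_natDegree hq0]
    exact_mod_cast (by omega : 0 < q.natDegree)
  have hlead : 0 < q.leadingCoeff := by
    by_contra h
    push_neg at h
    have htb := q.tendsto_atBot_of_leadingCoeff_nonpos hdegpos h
    obtain ⟨x, hx⟩ := (htb.eventually (Filter.eventually_lt_atBot 0)).exists
    exact absurd (hpos x) (not_lt.mpr hx.le)
  set lead := q.leadingCoeff with hleaddef
  -- decompose q
  set r := q.eraseLead with hrdef
  have hsum : ∀ x : ℝ, q.eval x = r.eval x + lead * x ^ (2 * m) := by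
    intro x
    conv_lhs => rw [← q.eraseLead_add_C_mul_X_pow]
    simp [hdeg]
    rfl
  have hrd : r.natDegree ≤ 2 * m - 1 := by
    rw [hrdef]
    have := q.eraseLead_natDegree_le
    omega
  obtain ⟨Cr, hCr, hCrb⟩ := aux_poly_bound r
  have hrb : ∀ x : ℝ, |r.eval x| ≤ Cr * (1 + x ^ 2) ^ (((2 * m : ℝ) - 1) / 2) := by
    intro x
    refine (hCrb x).trans ?_
    apply mul_le_mul_of_nonneg_left _ hCr.le
    apply Real.rpow_le_rpow_of_exponent_le (by nlinarith)
    have : (r.natDegree : ℝ) ≤ (2 * m : ℝ) - 1 := by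
      have h1 : ((2 * m - 1 : ℕ) : ℝ) = (2 * m : ℝ) - 1 := by
        push_cast [Nat.cast_sub (by omega : 1 ≤ 2 * m)]; ring
      calc (r.natDegree : ℝ) ≤ ((2 * m - 1 : ℕ) : ℝ) := Nat.cast_le.mpr hrd
        _ = _ := h1
    linarith
  set thr : ℝ := 2 ^ (m + 1) * Cr / lead with hthrdef
  have hthr : 0 < thr := by positivity
  set R : ℝ := max 1 (thr ^ 2) with hRdef
  have hR1 : (1 : ℝ) ≤ R := le_max_left _ _
  -- large |x|
  have hlarge : ∀ x : ℝ, R ≤ x ^ 2 →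
      lead / 2 ^ (m + 1) * (1 + x ^ 2) ^ (m : ℝ) ≤ q.eval x := by
    intro x hx
    set A : ℝ := 1 + x ^ 2 with hAdef
    have hA1 : (1 : ℝ) ≤ A := by nlinarith
    have hA0 : (0 : ℝ) < A := by linarith
    have hx1 : (1 : ℝ) ≤ x ^ 2 := le_trans hR1 hx
    have hAle : A ≤ 2 * x ^ 2 := by nlinarith
    -- lead * x^(2m) ≥ lead / 2^m * A^m
    have hxpow : lead / 2 ^ m * A ^ m ≤ lead * x ^ (2 * m) := by
      have h1 : (A / 2) ^ m ≤ (x ^ 2) ^ m := by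
        apply pow_le_pow_left₀ (by linarith) (by linarith)
      have h2 : x ^ (2 * m) = (x ^ 2) ^ m := by rw [← pow_mul]
      rw [h2]
      calc lead / 2 ^ m * A ^ m = lead * (A / 2) ^ m := by
            rw [div_pow]; ring
        _ ≤ lead * (x ^ 2) ^ m := by
            exact mul_le_mul_of_nonneg_left h1 hlead.le
    -- Cr * A^(m - 1/2) ≤ lead / 2^(m+1) * A^m
    have hsqrtA : thr ≤ A ^ ((1 : ℝ) / 2) := by
      have h1 : thr ^ 2 ≤ A := le_trans (le_trans (le_max_right 1 (thr ^ 2)) hx) (by nlinarith)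
      have h2 : thr = (thr ^ 2) ^ ((1:ℝ)/2) := by
        rw [← Real.sqrt_eq_rpow, Real.sqrt_sq hthr.le]
      rw [h2]
      exact Real.rpow_le_rpow (by positivity) h1 (by norm_num)
    have hrsmall : Cr * A ^ (((2 * m : ℝ) - 1) / 2) ≤ lead / 2 ^ (m + 1) * A ^ (m : ℝ) := by
      have hAm : A ^ ((m : ℝ)) = A ^ (((2 * m : ℝ) - 1) / 2) * A ^ ((1:ℝ)/2) := by
        rw [← Real.rpow_add hA0]; ring_nf
      rw [hAm]
      have hApos : (0:ℝ) < A ^ (((2 * m : ℝ) - 1) / 2) := Real.rpow_pos_of_pos hA0 _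
      have : Cr ≤ lead / 2 ^ (m + 1) * A ^ ((1:ℝ)/2) := by
        have := mul_le_mul_of_nonneg_left hsqrtA (by positivity : (0:ℝ) ≤ lead / 2 ^ (m + 1))
        calc Cr = lead / 2 ^ (m + 1) * thr := by
              rw [hthrdef]; field_simp
          _ ≤ _ := this
      calc Cr * A ^ (((2 * m : ℝ) - 1) / 2)
          ≤ (lead / 2 ^ (m + 1) * A ^ ((1:ℝ)/2)) * A ^ (((2 * m : ℝ) - 1) / 2) :=
            mul_le_mul_of_nonneg_right this hApos.le
        _ = lead / 2 ^ (m + 1) * (A ^ (((2 * m : ℝ) - 1) / 2) * A ^ ((1:ℝ)/2)) := by ring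
    have hAm_nat : A ^ ((m : ℝ)) = A ^ m := Real.rpow_natCast A m
    have hq : q.eval x = r.eval x + lead * x ^ (2 * m) := hsum x
    have h1 : -(Cr * A ^ (((2 * m : ℝ) - 1) / 2)) ≤ r.eval x := by
      have := hrb x
      have h2 := abs_le.mp this
      linarith [h2.1]
    have h2 : lead / 2 ^ m * A ^ ((m:ℝ)) = lead / 2 ^ (m + 1) * A ^ ((m:ℝ)) + lead / 2 ^ (m + 1) * A ^ ((m:ℝ)) := by
      rw [pow_succ]; ring
    rw [hq]
    calc lead / 2 ^ (m + 1) * A ^ ((m:ℝ))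
        = lead / 2 ^ m * A ^ ((m:ℝ)) - lead / 2 ^ (m + 1) * A ^ ((m:ℝ)) := by
          rw [h2]; ring
      _ ≤ lead / 2 ^ m * A ^ ((m:ℝ)) - Cr * A ^ (((2 * m : ℝ) - 1) / 2) := by linarith
      _ ≤ lead * x ^ (2 * m) - Cr * A ^ (((2 * m : ℝ) - 1) / 2) := by
          rw [hAm_nat]; linarith
      _ ≤ r.eval x + lead * x ^ (2 * m) := by linarith
  -- small |x|
  set s : ℝ := Real.sqrt R with hsdef
  have hKc : IsCompact (Set.Icc (-s) s) := isCompact_Icc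
  have hs0 : 0 ≤ s := Real.sqrt_nonneg R
  have hKne : (Set.Icc (-s) s).Nonempty := ⟨0, by constructor <;> linarith⟩
  obtain ⟨x₀, hx₀mem, hx₀min⟩ := hKc.exists_isMinOn hKne
    (Polynomial.continuous_aeval q).continuousOn
  set μ : ℝ := q.eval x₀ with hμdef
  have hμ : 0 < μ := hpos x₀
  have hsmall : ∀ x : ℝ, x ^ 2 ≤ R →
      μ / (1 + R) ^ (m : ℝ) * (1 + x ^ 2) ^ (m : ℝ) ≤ q.eval x := by
    intro x hx
    have hxin : x ∈ Set.Icc (-s) s := by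
      have := Real.abs_le_sqrt hx
      rw [abs_le] at this
      exact ⟨this.1, this.2⟩
    have hq : μ ≤ q.eval x := hx₀min hxin
    have hRpos : (0:ℝ) < 1 + R := by linarith
    have hAle : (1 + x ^ 2) ^ (m : ℝ) ≤ (1 + R) ^ (m : ℝ) := by
      apply Real.rpow_le_rpow (by positivity) (by linarith) (by positivity)
    have hApos : (0:ℝ) < (1 + x ^ 2) ^ (m : ℝ) := Real.rpow_pos_of_pos (by positivity) _
    have hBpos : (0:ℝ) < (1 + R) ^ (m : ℝ) := Real.rpow_pos_of_pos hRpos _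
    calc μ / (1 + R) ^ (m : ℝ) * (1 + x ^ 2) ^ (m : ℝ)
        ≤ μ / (1 + R) ^ (m : ℝ) * (1 + R) ^ (m : ℝ) := by
          apply mul_le_mul_of_nonneg_left hAle (by positivity)
      _ = μ := by field_simp
      _ ≤ q.eval x := hq
  refine ⟨min (lead / 2 ^ (m + 1)) (μ / (1 + R) ^ (m : ℝ)), ?_, ?_⟩
  · apply lt_min (by positivity)
    have : (0:ℝ) < (1 + R) ^ (m : ℝ) := Real.rpow_pos_of_pos (by linarith) _
    positivity
  · intro x
    have hApos : (0:ℝ) < (1 + x ^ 2) ^ (m : ℝ) := Real.rpow_pos_of_pos (by positivity) _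
    rcases le_total (x ^ 2) R with h | h
    · calc min (lead / 2 ^ (m + 1)) (μ / (1 + R) ^ (m : ℝ)) * (1 + x ^ 2) ^ (m : ℝ)
          ≤ μ / (1 + R) ^ (m : ℝ) * (1 + x ^ 2) ^ (m : ℝ) :=
            mul_le_mul_of_nonneg_right (min_le_right _ _) hApos.le
        _ ≤ q.eval x := hsmall x h
    · calc min (lead / 2 ^ (m + 1)) (μ / (1 + R) ^ (m : ℝ)) * (1 + x ^ 2) ^ (m : ℝ)
          ≤ lead / 2 ^ (m + 1) * (1 + x ^ 2) ^ (m : ℝ) :=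
            mul_le_mul_of_nonneg_right (min_le_left _ _) hApos.le
        _ ≤ q.eval x := hlarge x h

lemma aux_structure (m : ℕ) (hm : 1 ≤ m) (q : Polynomial ℝ) (hdeg : q.natDegree = 2 * m)
    (hpos : ∀ x : ℝ, 0 < q.eval x) (α : ℝ) (τ : ℕ) :
    ∃ p : Polynomial ℝ, p.natDegree ≤ (2 * m - 1) * τ ∧
      ∀ x : ℝ, iteratedDeriv τ (fun x => (q.eval x) ^ α) x =
        (q.eval x) ^ (α - τ) * p.eval x := by
  induction τ with
  | zero => exact ⟨1, by simp, fun x => by simp⟩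
  | succ n ih =>
    obtain ⟨p, hpd, hp⟩ := ih
    have hks : (2 * m - 1) * (n + 1) = (2 * m - 1) * n + (2 * m - 1) := Nat.mul_succ _ _
    refine ⟨Polynomial.C (α - n) * q.derivative * p + q * p.derivative, ?_, ?_⟩
    · apply le_trans (Polynomial.natDegree_add_le _ _)
      have h1 : (Polynomial.C (α - (n:ℝ)) * q.derivative * p).natDegree ≤ (2 * m - 1) * (n + 1) := by
        apply le_trans (Polynomial.natDegree_mul_le)
        have h2 : (Polynomial.C (α - (n:ℝ)) * q.derivative).natDegree ≤ 2 * m - 1 := by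
          apply le_trans (Polynomial.natDegree_mul_le)
          have := Polynomial.natDegree_derivative_le q
          simp only [Polynomial.natDegree_C]
          omega
        omega
      have h2 : (q * p.derivative).natDegree ≤ (2 * m - 1) * (n + 1) := by
        by_cases hp0 : p.natDegree = 0
        · obtain ⟨a, rfl⟩ := Polynomial.natDegree_eq_zero.mp hp0
          simp
        · apply le_trans (Polynomial.natDegree_mul_le)
          have := Polynomial.natDegree_derivative_le p
          omega
      exact max_le h1 h2
    · intro x
      rw [iteratedDeriv_succ]
      have hfun : iteratedDeriv n (fun x => (q.eval x) ^ α) =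
          fun x => (q.eval x) ^ (α - n) * p.eval x := funext hp
      rw [hfun]
      have hq : HasDerivAt (fun x => q.eval x) (q.derivative.eval x) x := q.hasDerivAt x
      have hr : HasDerivAt (fun x => q.eval x ^ (α - (n:ℝ)))
          (q.derivative.eval x * (α - n) * q.eval x ^ (α - n - 1)) x :=
        hq.rpow_const (Or.inl (ne_of_gt (hpos x)))
      have hpD : HasDerivAt (fun x => p.eval x) (p.derivative.eval x) x := p.hasDerivAt x
      rw [(show HasDerivAt (fun x => q.eval x ^ (α - (n:ℝ)) * p.eval x) _ x from hr.mul hpD).deriv]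
      have hQ : (0:ℝ) < q.eval x := hpos x
      have hsplit : q.eval x ^ (α - (n:ℝ)) = q.eval x ^ (α - n - 1) * q.eval x := by
        rw [← Real.rpow_add_one (ne_of_gt hQ)]; ring_nf
      have hcast : α - ((n:ℝ) + 1) = α - n - 1 := by ring
      push_cast
      rw [hsplit, hcast]
      simp only [Polynomial.eval_add, Polynomial.eval_mul, Polynomial.eval_C]
      ring

theorem stmt_1 (τ : ℕ) (υ : ℝ) (m : ℕ) (hm : 1 ≤ m) (q : Polynomial ℝ)
    (hdeg : q.natDegree = 2 * m) (hpos : ∀ x : ℝ, 0 < q.eval x) :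
    ∃ C : ℝ, 0 < C ∧ ∀ x : ℝ,
      |iteratedDeriv τ (fun x => (q.eval x) ^ (-υ / (2 * m))) x| ≤
        C * (1 + x ^ 2) ^ (-(υ + τ) / 2) := by
  have hm0 : ((m : ℝ)) ≠ 0 := Nat.cast_ne_zero.mpr (by omega)
  set α : ℝ := -υ / (2 * m) with hα
  set β : ℝ := α - τ with hβ
  obtain ⟨p, hpd, hp⟩ := aux_structure m hm q hdeg hpos α τ
  obtain ⟨Cp, hCp, hCpb⟩ := aux_poly_bound p
  obtain ⟨c, hc, hcb⟩ := aux_q_lower m hm q hdeg hpos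
  obtain ⟨Cq, hCq, hCqb⟩ := aux_poly_bound q
  have hCqb' : ∀ x : ℝ, q.eval x ≤ Cq * (1 + x ^ 2) ^ ((m : ℝ)) := by
    intro x
    have := hCqb x
    rw [abs_of_pos (hpos x)] at this
    refine this.trans (le_of_eq ?_)
    congr 1
    rw [hdeg]
    push_cast
    ring
  obtain ⟨K, hK, hKb⟩ : ∃ K : ℝ, 0 < K ∧
      ∀ x : ℝ, (q.eval x) ^ β ≤ K * (1 + x ^ 2) ^ ((m : ℝ) * β) := by
    rcases le_total 0 β with hb | hb
    · refine ⟨Cq ^ β, Real.rpow_pos_of_pos hCq β, fun x => ?_⟩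
      have h1 := Real.rpow_le_rpow (hpos x).le (hCqb' x) hb
      refine h1.trans (le_of_eq ?_)
      rw [Real.mul_rpow hCq.le (Real.rpow_pos_of_pos (by positivity) _).le,
        ← Real.rpow_mul (by positivity)]
    · refine ⟨c ^ β, Real.rpow_pos_of_pos hc β, fun x => ?_⟩
      have hcx : (0:ℝ) < c * (1 + x ^ 2) ^ ((m : ℝ)) := by
        have := Real.rpow_pos_of_pos (show (0:ℝ) < 1 + x ^ 2 by positivity) ((m : ℝ))
        positivity
      have h1 := Real.rpow_le_rpow_of_nonpos hcx (hcb x) hb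
      refine h1.trans (le_of_eq ?_)
      rw [Real.mul_rpow hc.le (Real.rpow_pos_of_pos (by positivity) _).le,
        ← Real.rpow_mul (by positivity)]
  refine ⟨K * Cp, by positivity, fun x => ?_⟩
  rw [hp x]
  have hA0 : (0:ℝ) < 1 + x ^ 2 := by positivity
  have hA1 : (1:ℝ) ≤ 1 + x ^ 2 := by nlinarith
  have hqb : (0:ℝ) < (q.eval x) ^ β := Real.rpow_pos_of_pos (hpos x) β
  rw [abs_mul, abs_of_pos hqb]
  have hpdle : ((p.natDegree : ℝ)) / 2 ≤ (2 * (m:ℝ) - 1) * τ / 2 := by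
    have h1 : ((p.natDegree : ℝ)) ≤ (((2 * m - 1) * τ : ℕ) : ℝ) := Nat.cast_le.mpr hpd
    have h2 : (((2 * m - 1) * τ : ℕ) : ℝ) = (2 * (m:ℝ) - 1) * τ := by
      push_cast [Nat.cast_sub (by omega : 1 ≤ 2 * m)]
      ring
    rw [h2] at h1
    linarith
  calc (q.eval x) ^ β * |p.eval x|
      ≤ (K * (1 + x ^ 2) ^ ((m : ℝ) * β)) * (Cp * (1 + x ^ 2) ^ ((p.natDegree : ℝ) / 2)) := by
        apply mul_le_mul (hKb x) (hCpb x) (abs_nonneg _)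
        have := Real.rpow_pos_of_pos hA0 ((m : ℝ) * β)
        positivity
    _ = (K * Cp) * (1 + x ^ 2) ^ ((m : ℝ) * β + (p.natDegree : ℝ) / 2) := by
        rw [Real.rpow_add hA0]; ring
    _ ≤ (K * Cp) * (1 + x ^ 2) ^ (-(υ + τ) / 2) := by
        apply mul_le_mul_of_nonneg_left _ (by positivity)
        apply Real.rpow_le_rpow_of_exponent_le hA1
        have hfin : (m : ℝ) * β + (2 * (m:ℝ) - 1) * τ / 2 = -(υ + τ) / 2 := by
          rw [hβ, hα]
          field_simp
          ring
        linarith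
end

section
/- Let n ∈ ℕ, let υ be an even positive integer with υ ≤ 2n, and let m be a nonnegative integer with m ≤ υ − 2. Then the Möbius-transformed trapezoidal rule is exact for the monomial x^m against the weight ω_υ: ∫_ℝ x^m (1+x²)^(−υ/2) dx = (2π/n)·Σ_{j=1}^n φ(θ_j)^m · (1+φ(θ_j)²)^(−υ/2) · φ'(θ_j), where φ(θ) = −cot(θ/2), φ'(θ) = 1/(2 sin²(θ/2)), and θ_j = 2πj/n − π/n. -/
set_option maxHeartbeats 1000000

open Real MeasureTheory

section Aux

open Complex Finset

private lemma sumExp (n : ℕ) (hn : 1 ≤ n) (l : ℤ) (hl : l ≠ 0) (hln : l.natAbs < n) :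
    ∑ j ∈ Finset.range n, Complex.exp (l * (2 * π * (j + 1) / n - π / n) * Complex.I) = 0 := by
  have hn0 : (n : ℂ) ≠ 0 := Nat.cast_ne_zero.mpr (by omega)
  have hπ : (π : ℂ) ≠ 0 := Complex.ofReal_ne_zero.mpr Real.pi_ne_zero
  have key : ∀ j ∈ Finset.range n, Complex.exp (l * (2 * π * (j + 1) / n - π / n) * Complex.I)
      = Complex.exp ((l : ℂ) * π / n * Complex.I) * Complex.exp ((2 * π * l / n) * Complex.I) ^ j := by
    intro j _
    rw [← Complex.exp_nat_mul, ← Complex.exp_add]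
    congr 1
    field_simp
    ring
  rw [Finset.sum_congr rfl key, ← Finset.mul_sum]
  have hr1 : Complex.exp ((2 * π * l / n) * Complex.I) ≠ 1 := by
    rw [Ne, Complex.exp_eq_one_iff]
    rintro ⟨k, hk⟩
    have h2 : (l : ℂ) = k * n := by
      field_simp at hk
      have h3 : (2 * (π:ℂ) * Complex.I) * l = (2 * (π:ℂ) * Complex.I) * (k * n) := by
        linear_combination (2 * (π:ℂ) * Complex.I) * hk
      exact mul_left_cancel₀ (mul_ne_zero (mul_ne_zero two_ne_zero hπ) Complex.I_ne_zero) h3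
    have h4 : l = k * n := by exact_mod_cast h2
    subst h4
    have hk0 : k ≠ 0 := fun h => hl (by simp [h])
    have h5 : (k * (n:ℤ)).natAbs = k.natAbs * n := by rw [Int.natAbs_mul, Int.natAbs_natCast]
    have h6 := Nat.le_mul_of_pos_left n (Int.natAbs_pos.mpr hk0)
    omega
  have hx : Complex.exp ((2 * π * l / n) * Complex.I) ^ n = 1 := by
    rw [← Complex.exp_nat_mul]
    have h7 : (n : ℂ) * (2 * π * l / n * Complex.I) = l * (2 * π * Complex.I) := by
      field_simp
    rw [h7, Complex.exp_int_mul_two_pi_mul_I]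
  rw [geom_sum_eq hr1, hx]
  simp

private lemma intExp (l : ℤ) (hl : l ≠ 0) :
    ∫ θ in (0:ℝ)..(2*π), Complex.exp (l * θ * Complex.I) = 0 := by
  have hc : (l : ℂ) * Complex.I ≠ 0 :=
    mul_ne_zero (Int.cast_ne_zero.mpr hl) Complex.I_ne_zero
  have h : ∀ θ : ℝ, (l:ℂ) * θ * Complex.I = ((l:ℂ) * Complex.I) * θ := fun θ => by ring
  simp_rw [h]
  rw [integral_exp_mul_complex hc]
  have h1 : ((l:ℂ) * Complex.I) * (2*π : ℝ) = l * (2 * π * Complex.I) := by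
    push_cast; ring
  rw [h1, Complex.exp_int_mul_two_pi_mul_I]
  simp

private lemma intEqSum (n : ℕ) (hn : 1 ≤ n) (l : ℤ) (hln : l.natAbs < n) :
    ∫ θ in (0:ℝ)..(2*π), Complex.exp (l * θ * Complex.I) =
      (2*π/n) * ∑ j ∈ Finset.range n, Complex.exp (l * (2 * π * (j + 1) / n - π / n) * Complex.I) := by
  have hn0 : (n : ℂ) ≠ 0 := Nat.cast_ne_zero.mpr (by omega)
  rcases eq_or_ne l 0 with rfl | hl
  · simp
    field_simp
  · rw [intExp l hl, sumExp n hn l hl hln, mul_zero]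

private lemma aux1 (e : ℂ) (he : e ≠ 0) (a : ℕ) :
    (e + e⁻¹)^a = ∑ j ∈ Finset.range (a+1), (a.choose j : ℂ) * e^(2*(j:ℤ)-a) := by
  rw [add_pow]
  refine Finset.sum_congr rfl (fun j hj => ?_)
  simp only [Finset.mem_range] at hj
  rw [← zpow_natCast e j, ← zpow_natCast e⁻¹, inv_zpow, ← zpow_neg, ← zpow_add₀ he]
  rw [show (j:ℤ) + -((a-j:ℕ):ℤ) = 2*(j:ℤ)-a by omega]
  ring

private lemma aux2 (e : ℂ) (he : e ≠ 0) (b : ℕ) :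
    (e⁻¹ + -e)^b = ∑ k ∈ Finset.range (b+1), ((b.choose k : ℂ) * (-1)^(b-k)) * e^((b:ℤ)-2*k) := by
  rw [add_pow]
  refine Finset.sum_congr rfl (fun k hk => ?_)
  simp only [Finset.mem_range] at hk
  have h : (e⁻¹)^k * (-e)^(b-k) = (-1:ℂ)^(b-k) * e^((b:ℤ)-2*k) := by
    rw [neg_pow, ← zpow_natCast e (b-k), ← zpow_natCast e⁻¹ k, inv_zpow, ← zpow_neg,
      mul_comm (e ^ (-(k:ℤ))), mul_assoc, ← zpow_add₀ he]
    rw [show ((b-k:ℕ):ℤ) + -(k:ℤ) = (b:ℤ)-2*k by omega]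
  linear_combination (b.choose k : ℂ) * h

private lemma cosSinExpand (w : ℂ) (a b : ℕ) :
    (Complex.cos w)^a * (Complex.sin w)^b =
      ∑ j ∈ Finset.range (a+1), ∑ k ∈ Finset.range (b+1),
        ((a.choose j : ℂ) * (b.choose k) * (-1)^(b-k) * Complex.I^b / 2^(a+b)) *
          Complex.exp (w * Complex.I) ^ (2*(j:ℤ) - a + b - 2*k) := by
  set e := Complex.exp (w * Complex.I) with he_def
  have he : e ≠ 0 := Complex.exp_ne_zero _
  have hcos : Complex.cos w = (e + e⁻¹) / 2 := by
    rw [eq_div_iff (two_ne_zero : (2:ℂ) ≠ 0), mul_comm, Complex.two_cos, ← Complex.exp_neg,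
      neg_mul]
  have hsin : Complex.sin w = (e⁻¹ + -e) * Complex.I / 2 := by
    rw [eq_div_iff (two_ne_zero : (2:ℂ) ≠ 0), mul_comm (Complex.sin w), Complex.two_sin,
      ← Complex.exp_neg, neg_mul]
    ring
  have hmain : (e + e⁻¹)^a * (e⁻¹ + -e)^b * (Complex.I^b / 2^(a+b)) =
      ∑ j ∈ Finset.range (a+1), ∑ k ∈ Finset.range (b+1),
        ((a.choose j : ℂ) * (b.choose k) * (-1)^(b-k) * Complex.I^b / 2^(a+b)) *
          e ^ (2*(j:ℤ) - a + b - 2*k) := by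
    rw [aux1 e he a, aux2 e he b, Finset.sum_mul_sum, Finset.sum_mul]
    refine Finset.sum_congr rfl (fun j hj => ?_)
    rw [Finset.sum_mul]
    refine Finset.sum_congr rfl (fun k hk => ?_)
    have hm : e^(2*(j:ℤ)-a) * e^((b:ℤ)-2*k) = e^(2*(j:ℤ) - a + b - 2*k) := by
      rw [← zpow_add₀ he]
      rw [show 2*(j:ℤ)-a + ((b:ℤ)-2*k) = 2*(j:ℤ) - a + b - 2*k by ring]
    linear_combination ((a.choose j : ℂ) * (b.choose k) * (-1)^(b-k) * Complex.I^b / 2^(a+b)) * hm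
  rw [hcos, hsin, ← hmain]
  have h2 : ((e⁻¹ + -e) * Complex.I / 2 : ℂ)^b = (e⁻¹+-e)^b * Complex.I^b / 2^b := by
    rw [div_pow, mul_pow]
  have h3 : ((e + e⁻¹) / 2 : ℂ)^a = (e+e⁻¹)^a / 2^a := div_pow _ _ _
  rw [h2, h3, pow_add]
  ring

private noncomputable def coefD (a b j k : ℕ) : ℂ :=
  (a.choose j : ℂ) * (b.choose k) * (-1)^(b-k) * Complex.I^b / 2^(a+b)

private def lD (a c j k : ℕ) : ℤ := (j:ℤ) - k + c - a

private lemma keyExpand (a b c : ℕ) (hc : a + b = 2 * c) (θ : ℝ) :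
    ((Real.cos (θ/2) ^ a * Real.sin (θ/2) ^ b : ℝ) : ℂ) =
      ∑ j ∈ Finset.range (a+1), ∑ k ∈ Finset.range (b+1),
        coefD a b j k * Complex.exp ((lD a c j k : ℂ) * θ * Complex.I) := by
  have h0 : ((Real.cos (θ/2) ^ a * Real.sin (θ/2) ^ b : ℝ) : ℂ)
      = (Complex.cos ((θ:ℂ)/2))^a * (Complex.sin ((θ:ℂ)/2))^b := by
    push_cast [Complex.ofReal_cos, Complex.ofReal_sin]
    norm_num
  rw [h0, cosSinExpand]
  refine Finset.sum_congr rfl (fun j hj => Finset.sum_congr rfl (fun k hk => ?_))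
  rw [coefD]
  congr 1
  have hE : (2*(j:ℤ) - a + b - 2*k) = 2 * (lD a c j k) := by rw [lD]; omega
  rw [hE, ← Complex.exp_int_mul]
  congr 1
  push_cast
  ring

private lemma trapExact (n a b c : ℕ) (hn : 1 ≤ n) (hc : a + b = 2 * c) (hcn : c < n) :
    ∫ θ in (0:ℝ)..(2*π), (Real.cos (θ/2))^a * (Real.sin (θ/2))^b =
      (2*π/n) * ∑ i ∈ Finset.range n,
        (Real.cos ((2*π*(i+1)/n - π/n)/2))^a * (Real.sin ((2*π*(i+1)/n - π/n)/2))^b := by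
  have hInt : ∀ j k : ℕ, IntervalIntegrable
      (fun θ : ℝ => coefD a b j k * Complex.exp ((lD a c j k : ℂ) * θ * Complex.I))
      MeasureTheory.volume 0 (2*π) := by
    intro j k
    apply Continuous.intervalIntegrable
    exact continuous_const.mul (Complex.continuous_exp.comp (by fun_prop))
  have hIntSum : ∀ j : ℕ, IntervalIntegrable
      (fun θ : ℝ => ∑ k ∈ Finset.range (b+1),
        coefD a b j k * Complex.exp ((lD a c j k : ℂ) * θ * Complex.I))
      MeasureTheory.volume 0 (2*π) := by
    intro j
    have h := IntervalIntegrable.sum (μ := MeasureTheory.volume) (a := 0) (b := 2*π)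
      (Finset.range (b+1))
      (f := fun k (θ : ℝ) => coefD a b j k * Complex.exp ((lD a c j k : ℂ) * θ * Complex.I))
      (fun k _ => hInt j k)
    have e : (∑ k ∈ Finset.range (b+1), fun (θ:ℝ) =>
        coefD a b j k * Complex.exp ((lD a c j k : ℂ) * θ * Complex.I))
        = fun (θ:ℝ) => ∑ k ∈ Finset.range (b+1),
          coefD a b j k * Complex.exp ((lD a c j k : ℂ) * θ * Complex.I) := by
      funext θ
      simp
    rwa [e] at h
  have hbound : ∀ j k : ℕ, j ∈ Finset.range (a+1) → k ∈ Finset.range (b+1) →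
      (lD a c j k).natAbs < n := by
    intro j k hj hk
    simp only [Finset.mem_range] at hj hk
    rw [lD]
    omega
  have swap : ∀ f : ℕ → ℕ → ℕ → ℂ,
      (∑ j ∈ Finset.range (a+1), ∑ k ∈ Finset.range (b+1), ∑ i ∈ Finset.range n, f j k i)
      = ∑ i ∈ Finset.range n, ∑ j ∈ Finset.range (a+1), ∑ k ∈ Finset.range (b+1), f j k i := by
    intro f
    calc (∑ j ∈ Finset.range (a+1), ∑ k ∈ Finset.range (b+1), ∑ i ∈ Finset.range n, f j k i)
        = ∑ j ∈ Finset.range (a+1), ∑ i ∈ Finset.range n, ∑ k ∈ Finset.range (b+1), f j k i :=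
          Finset.sum_congr rfl (fun j _ => Finset.sum_comm)
      _ = ∑ i ∈ Finset.range n, ∑ j ∈ Finset.range (a+1), ∑ k ∈ Finset.range (b+1), f j k i :=
          Finset.sum_comm
  have main : (∫ θ in (0:ℝ)..(2*π), ((Real.cos (θ/2) ^ a * Real.sin (θ/2) ^ b : ℝ) : ℂ)) =
      ((2*π/n : ℝ) : ℂ) * ∑ i ∈ Finset.range n,
        ((Real.cos ((2*π*(i+1)/n - π/n)/2) ^ a * Real.sin ((2*π*(i+1)/n - π/n)/2) ^ b : ℝ) : ℂ) := by
    calc (∫ θ in (0:ℝ)..(2*π), ((Real.cos (θ/2) ^ a * Real.sin (θ/2) ^ b : ℝ) : ℂ))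
        = ∫ θ in (0:ℝ)..(2*π), ∑ j ∈ Finset.range (a+1), ∑ k ∈ Finset.range (b+1),
            coefD a b j k * Complex.exp ((lD a c j k : ℂ) * θ * Complex.I) := by
          simp_rw [keyExpand a b c hc]
      _ = ∑ j ∈ Finset.range (a+1), ∑ k ∈ Finset.range (b+1),
            coefD a b j k * ∫ θ in (0:ℝ)..(2*π), Complex.exp ((lD a c j k : ℂ) * θ * Complex.I) := by
          rw [intervalIntegral.integral_finset_sum (fun j _ => hIntSum j)]
          refine Finset.sum_congr rfl (fun j hj => ?_)
          rw [intervalIntegral.integral_finset_sum (fun k _ => hInt j k)]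
          exact Finset.sum_congr rfl (fun k hk => intervalIntegral.integral_const_mul _ _)
      _ = ∑ j ∈ Finset.range (a+1), ∑ k ∈ Finset.range (b+1),
            ∑ i ∈ Finset.range n, ((2*π/n : ℂ) * (coefD a b j k *
              Complex.exp ((lD a c j k : ℂ) * ((2 * π * (i + 1) / n - π / n) : ℝ) * Complex.I))) := by
          refine Finset.sum_congr rfl (fun j hj => Finset.sum_congr rfl (fun k hk => ?_))
          rw [intEqSum n hn (lD a c j k) (hbound j k hj hk), Finset.mul_sum, Finset.mul_sum]
          refine Finset.sum_congr rfl (fun i hi => ?_)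
          push_cast
          ring
      _ = ∑ i ∈ Finset.range n, ∑ j ∈ Finset.range (a+1), ∑ k ∈ Finset.range (b+1),
            ((2*π/n : ℂ) * (coefD a b j k *
              Complex.exp ((lD a c j k : ℂ) * ((2 * π * (i + 1) / n - π / n) : ℝ) * Complex.I))) :=
          swap _
      _ = ((2*π/n : ℝ) : ℂ) * ∑ i ∈ Finset.range n,
            ((Real.cos ((2*π*(i+1)/n - π/n)/2) ^ a * Real.sin ((2*π*(i+1)/n - π/n)/2) ^ b : ℝ) : ℂ) := by
          simp only [← Finset.mul_sum]
          congr 1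
          · push_cast
            ring
          refine Finset.sum_congr rfl (fun i hi => ?_)
          rw [keyExpand a b c hc (2*π*(i+1)/n - π/n)]
  apply Complex.ofReal_injective
  rw [← intervalIntegral.integral_ofReal]
  rw [main]
  push_cast
  ring

private lemma pointEq (υ m : ℕ) (hm : m + 2 ≤ υ) (θ : ℝ) (h1 : 0 < θ) (h2 : θ < 2*π) :
    (-Real.cos (θ/2) / Real.sin (θ/2)) ^ m *
      (1 + (-Real.cos (θ/2) / Real.sin (θ/2)) ^ 2) ^ (-(υ:ℝ)/2) *
      (1 / (2 * Real.sin (θ/2) ^ 2))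
    = (-1:ℝ)^m * Real.cos (θ/2)^m * Real.sin (θ/2)^(υ - m - 2) / 2 := by
  have hs : 0 < Real.sin (θ/2) :=
    Real.sin_pos_of_pos_of_lt_pi (by linarith) (by linarith [Real.pi_pos])
  set s := Real.sin (θ/2) with hsdef
  set c := Real.cos (θ/2) with hcdef
  have hs0 : s ≠ 0 := ne_of_gt hs
  have hpy : s^2 + c^2 = 1 := Real.sin_sq_add_cos_sq _
  have h3 : 1 + (-c/s)^2 = (s^2)⁻¹ := by
    field_simp
    linarith
  have h4 : ((s^2)⁻¹ : ℝ) ^ (-(υ:ℝ)/2) = s ^ (υ:ℕ) := by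
    calc ((s^2)⁻¹ : ℝ) ^ (-(υ:ℝ)/2) = ((s^2) ^ (-(υ:ℝ)/2))⁻¹ := Real.inv_rpow (sq_nonneg s) _
      _ = (s^2) ^ ((υ:ℝ)/2) := by
          rw [← Real.rpow_neg (sq_nonneg s)]
          congr 1
          ring
      _ = (s^((2:ℕ):ℝ)) ^ ((υ:ℝ)/2) := by rw [Real.rpow_natCast]
      _ = s ^ (((2:ℕ):ℝ) * ((υ:ℝ)/2)) := (Real.rpow_mul hs.le _ _).symm
      _ = s ^ ((υ:ℕ):ℝ) := by
          congr 1
          push_cast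
          ring
      _ = s ^ (υ:ℕ) := Real.rpow_natCast s υ
  rw [h3, h4]
  have hsplit : s^(υ:ℕ) = s^m * s^2 * s^(υ - m - 2) := by
    rw [← pow_add, ← pow_add]
    congr 1
    omega
  rw [hsplit, neg_div, neg_pow, div_pow]
  field_simp

private lemma changeVar (g : ℝ → ℝ) :
    (∫ x : ℝ, g x) = ∫ θ in Set.Ioo (0:ℝ) (2*π),
      (1/(2 * Real.sin (θ/2)^2)) * g (-Real.cos (θ/2) / Real.sin (θ/2)) := by
  set f : ℝ → ℝ := fun θ => Real.tan ((θ - π)/2) with hf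
  set f' : ℝ → ℝ := fun θ => 1/(2 * Real.cos ((θ - π)/2)^2) with hf'
  have hmem : ∀ θ ∈ Set.Ioo (0:ℝ) (2*π), (θ - π)/2 ∈ Set.Ioo (-(π/2)) (π/2) := by
    intro θ hθ
    obtain ⟨hθ1, hθ2⟩ := hθ
    constructor <;> [linarith; linarith]
  have hcosne : ∀ θ ∈ Set.Ioo (0:ℝ) (2*π), Real.cos ((θ - π)/2) ≠ 0 := by
    intro θ hθ
    obtain ⟨ha, hb⟩ := hmem θ hθ
    exact ne_of_gt (Real.cos_pos_of_mem_Ioo ⟨ha, hb⟩)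
  have hderiv : ∀ θ ∈ Set.Ioo (0:ℝ) (2*π), HasDerivWithinAt f (f' θ) (Set.Ioo (0:ℝ) (2*π)) θ := by
    intro θ hθ
    have h1 : HasDerivAt (fun θ : ℝ => (θ - π)/2) (1/2) θ :=
      ((hasDerivAt_id θ).sub_const π).div_const 2
    have h2 : HasDerivAt Real.tan (1 / Real.cos ((θ - π)/2) ^ 2) ((θ - π)/2) :=
      Real.hasDerivAt_tan (hcosne θ hθ)
    have h3 := h2.comp θ h1
    have h4 : (1 / Real.cos ((θ - π)/2) ^ 2) * (1/2) = f' θ := by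
      rw [hf']
      ring
    rw [← h4]
    exact h3.hasDerivWithinAt
  have hinj : Set.InjOn f (Set.Ioo (0:ℝ) (2*π)) := by
    intro x hx y hy hxy
    have h1 := Real.injOn_tan (hmem x hx) (hmem y hy) hxy
    linarith
  have himg : f '' (Set.Ioo (0:ℝ) (2*π)) = Set.univ := by
    apply Set.eq_univ_of_forall
    intro x
    refine ⟨2 * Real.arctan x + π, ⟨?_, ?_⟩, ?_⟩
    · have := Real.neg_pi_div_two_lt_arctan x
      linarith
    · have := Real.arctan_lt_pi_div_two x
      linarith
    · show Real.tan ((2 * Real.arctan x + π - π)/2) = x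
      rw [show (2 * Real.arctan x + π - π)/2 = Real.arctan x by ring, Real.tan_arctan]
  have hcv := integral_image_eq_integral_abs_deriv_smul (measurableSet_Ioo) hderiv hinj g
  rw [himg] at hcv
  rw [setIntegral_univ] at hcv
  rw [hcv]
  refine setIntegral_congr_fun measurableSet_Ioo (fun θ hθ => ?_)
  have hfθ : f θ = -Real.cos (θ/2) / Real.sin (θ/2) := by
    rw [hf]
    simp only
    rw [show (θ-π)/2 = θ/2 - π/2 by ring, Real.tan_eq_sin_div_cos,
      Real.sin_sub_pi_div_two, Real.cos_sub_pi_div_two]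
  have hf'θ : f' θ = 1/(2 * Real.sin (θ/2)^2) := by
    rw [hf']
    simp only
    rw [show (θ-π)/2 = θ/2 - π/2 by ring, Real.cos_sub_pi_div_two]
  rw [smul_eq_mul, hfθ, hf'θ, _root_.abs_of_nonneg (by positivity)]

end Aux

theorem stmt_9 (n : ℕ) (hn : 1 ≤ n) (υ : ℕ) (hυeven : Even υ) (hυpos : 0 < υ)
    (hυn : υ ≤ 2 * n) (m : ℕ) (hm : m ≤ υ - 2) :
    (∫ x : ℝ, x ^ m * (1 + x ^ 2) ^ (-(υ : ℝ) / 2)) =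
      (2 * π / n) * ∑ j ∈ Finset.range n,
        (-Real.cos ((2 * π * (j + 1) / n - π / n) / 2) /
            Real.sin ((2 * π * (j + 1) / n - π / n) / 2)) ^ m *
          (1 + (-Real.cos ((2 * π * (j + 1) / n - π / n) / 2) /
              Real.sin ((2 * π * (j + 1) / n - π / n) / 2)) ^ 2) ^ (-(υ : ℝ) / 2) *
          (1 / (2 * Real.sin ((2 * π * (j + 1) / n - π / n) / 2) ^ 2)) := by
  obtain ⟨p, hp⟩ := hυeven
  have hυ2 : 2 ≤ υ := by omega
  have hm2 : m + 2 ≤ υ := by omega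
  have hn0 : (0:ℝ) < n := by positivity
  set b := υ - m - 2 with hb
  have hc : m + b = 2 * (p - 1) := by omega
  have hcn : p - 1 < n := by omega
  have hθmem : ∀ i ∈ Finset.range n, 0 < 2*π*((i:ℝ)+1)/n - π/n ∧ 2*π*((i:ℝ)+1)/n - π/n < 2*π := by
    intro i hi
    simp only [Finset.mem_range] at hi
    have hin : ((i:ℝ)+1) ≤ n := by exact_mod_cast Nat.succ_le_of_lt hi
    have hrw : 2*π*((i:ℝ)+1)/n - π/n = π*(2*(i:ℝ)+1)/n := by ring
    constructor
    · rw [hrw]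
      positivity
    · rw [hrw, div_lt_iff₀ hn0]
      nlinarith [Real.pi_pos]
  -- change of variables
  rw [changeVar (fun x => x ^ m * (1 + x ^ 2) ^ (-(υ : ℝ) / 2))]
  have hcongr : ∫ θ in Set.Ioo (0:ℝ) (2*π), (1/(2 * Real.sin (θ/2)^2)) *
        ((-Real.cos (θ/2) / Real.sin (θ/2)) ^ m *
          (1 + (-Real.cos (θ/2) / Real.sin (θ/2)) ^ 2) ^ (-(υ:ℝ)/2))
      = ∫ θ in Set.Ioo (0:ℝ) (2*π), (-1:ℝ)^m * Real.cos (θ/2)^m * Real.sin (θ/2)^b / 2 := by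
    refine setIntegral_congr_fun measurableSet_Ioo (fun θ hθ => ?_)
    obtain ⟨h1, h2⟩ := hθ
    rw [← pointEq υ m hm2 θ h1 h2]
    ring
  rw [hcongr]
  have hIoo : ∫ θ in Set.Ioo (0:ℝ) (2*π), (-1:ℝ)^m * Real.cos (θ/2)^m * Real.sin (θ/2)^b / 2
      = ∫ θ in (0:ℝ)..(2*π), (-1:ℝ)^m * Real.cos (θ/2)^m * Real.sin (θ/2)^b / 2 := by
    rw [intervalIntegral.integral_of_le (by positivity), ← integral_Ioc_eq_integral_Ioo]
  rw [hIoo]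
  have hpull : (∫ θ in (0:ℝ)..(2*π), (-1:ℝ)^m * Real.cos (θ/2)^m * Real.sin (θ/2)^b / 2)
      = ((-1:ℝ)^m / 2) * ∫ θ in (0:ℝ)..(2*π), Real.cos (θ/2)^m * Real.sin (θ/2)^b := by
    rw [← intervalIntegral.integral_const_mul]
    congr 1
    funext θ
    ring
  rw [hpull, trapExact n m b (p-1) hn hc hcn, Finset.mul_sum, Finset.mul_sum, ← Finset.sum_congr rfl]
  · rw [Finset.mul_sum]
  · intro i hi
    obtain ⟨h1, h2⟩ := hθmem i hi
    rw [pointEq υ m hm2 _ h1 h2]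
    ring
end
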